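/- arXiv:2004.06149 — 2 statements merged into one kernel-verified Lean document; each statement's English description precedes it below -/
import Mathlib

section
/- With B_w defined as the block matrix with B₀ in the upper-left, w copies of the column b, w copies of the row bᵀ, and uw·I_w in the lower-right: if B₁ = [[B₀, b],[bᵀ, u]] is invertible with inverse written in block form [[A, c],[cᵀ, z]], then B_w is invertible with inverse given by the block matrix with A in the upper-left n×n block, c/w repeated in each of the last w columns of the first n rows, cᵀ/w repeated in each of the last w rows of the first n columns, and lower-right w×w block equal to ((zu−1)/(w²u))·J_w + (1/(uw))·I_w, where J_w is the w×w all-ones matrix. -/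
open Matrix

theorem stmt_1 (n w : ℕ) (hw : 1 ≤ w)
    (B₀ A : Matrix (Fin n) (Fin n) ℝ) (b c : Fin n → ℝ) (u z : ℝ) (hu : u ≠ 0)
    (hinv₁ : Matrix.fromBlocks B₀ (fun i _ => b i) (fun _ j => b j)
        (u • (1 : Matrix (Fin 1) (Fin 1) ℝ)) *
      Matrix.fromBlocks A (fun i _ => c i) (fun _ j => c j)
        (z • (1 : Matrix (Fin 1) (Fin 1) ℝ)) = 1)
    (hinv₂ : Matrix.fromBlocks A (fun i _ => c i) (fun _ j => c j)
        (z • (1 : Matrix (Fin 1) (Fin 1) ℝ)) *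
      Matrix.fromBlocks B₀ (fun i _ => b i) (fun _ j => b j)
        (u • (1 : Matrix (Fin 1) (Fin 1) ℝ)) = 1) :
    Matrix.fromBlocks B₀ (fun i _ => b i) (fun _ j => b j)
        ((u * w) • (1 : Matrix (Fin w) (Fin w) ℝ)) *
      Matrix.fromBlocks A (fun i _ => c i / w) (fun _ j => c j / w)
        (Matrix.of fun i j =>
          (z * u - 1) / ((w : ℝ) ^ 2 * u) + if i = j then 1 / (u * w) else 0) = 1 ∧
    Matrix.fromBlocks A (fun i _ => c i / w) (fun _ j => c j / w)
        (Matrix.of fun i j =>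
          (z * u - 1) / ((w : ℝ) ^ 2 * u) + if i = j then 1 / (u * w) else 0) *
      Matrix.fromBlocks B₀ (fun i _ => b i) (fun _ j => b j)
        ((u * w) • (1 : Matrix (Fin w) (Fin w) ℝ)) = 1 := by
  have hw0 : (w : ℝ) ≠ 0 := Nat.cast_ne_zero.mpr (by omega)
  have A1 : ∀ i j, (∑ k, B₀ i k * A k j) + b i * c j = if i = j then 1 else 0 := by
    intro i j
    have := congrFun (congrFun hinv₁ (Sum.inl i)) (Sum.inl j)
    simpa [Matrix.mul_apply, Fintype.sum_sum_type, Fin.sum_univ_one, Matrix.one_apply, Matrix.fromBlocks, Matrix.of_apply] using this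
  have A2 : ∀ i, (∑ k, B₀ i k * c k) + b i * z = 0 := by
    intro i
    have := congrFun (congrFun hinv₁ (Sum.inl i)) (Sum.inr 0)
    simpa [Matrix.mul_apply, Fintype.sum_sum_type, Fin.sum_univ_one, Matrix.one_apply, Matrix.fromBlocks, Matrix.of_apply] using this
  have A3 : ∀ j, (∑ k, b k * A k j) + u * c j = 0 := by
    intro j
    have := congrFun (congrFun hinv₁ (Sum.inr 0)) (Sum.inl j)
    simpa [Matrix.mul_apply, Fintype.sum_sum_type, Fin.sum_univ_one, Matrix.one_apply, Matrix.fromBlocks, Matrix.of_apply] using this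
  have A4 : (∑ k, b k * c k) + u * z = 1 := by
    have := congrFun (congrFun hinv₁ (Sum.inr 0)) (Sum.inr 0)
    simpa [Matrix.mul_apply, Fintype.sum_sum_type, Fin.sum_univ_one, Matrix.one_apply, Matrix.fromBlocks, Matrix.of_apply] using this
  have B1 : ∀ i j, (∑ k, A i k * B₀ k j) + c i * b j = if i = j then 1 else 0 := by
    intro i j
    have := congrFun (congrFun hinv₂ (Sum.inl i)) (Sum.inl j)
    simpa [Matrix.mul_apply, Fintype.sum_sum_type, Fin.sum_univ_one, Matrix.one_apply, Matrix.fromBlocks, Matrix.of_apply] using this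
  have B2 : ∀ i, (∑ k, A i k * b k) + c i * u = 0 := by
    intro i
    have := congrFun (congrFun hinv₂ (Sum.inl i)) (Sum.inr 0)
    simpa [Matrix.mul_apply, Fintype.sum_sum_type, Fin.sum_univ_one, Matrix.one_apply, Matrix.fromBlocks, Matrix.of_apply] using this
  have B3 : ∀ j, (∑ k, c k * B₀ k j) + z * b j = 0 := by
    intro j
    have := congrFun (congrFun hinv₂ (Sum.inr 0)) (Sum.inl j)
    simpa [Matrix.mul_apply, Fintype.sum_sum_type, Fin.sum_univ_one, Matrix.one_apply, Matrix.fromBlocks, Matrix.of_apply] using this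
  have B4 : (∑ k, c k * b k) + z * u = 1 := by
    have := congrFun (congrFun hinv₂ (Sum.inr 0)) (Sum.inr 0)
    simpa [Matrix.mul_apply, Fintype.sum_sum_type, Fin.sum_univ_one, Matrix.one_apply, Matrix.fromBlocks, Matrix.of_apply] using this
  constructor
  · ext i j
    rcases i with i | i <;> rcases j with j | j <;>
      simp only [Matrix.mul_apply, Fintype.sum_sum_type, Matrix.fromBlocks_apply₁₁,
        Matrix.fromBlocks_apply₁₂, Matrix.fromBlocks_apply₂₁, Matrix.fromBlocks_apply₂₂,
        Matrix.one_apply, Matrix.smul_apply, smul_eq_mul, Matrix.of_apply,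
        Sum.inl.injEq, Sum.inr.injEq, mul_ite, mul_one, mul_zero, ite_mul, zero_mul,
        mul_add, add_mul, Finset.sum_add_distrib, Finset.sum_const, Finset.card_univ,
        Fintype.card_fin, nsmul_eq_mul, Finset.sum_ite_eq, Finset.sum_ite_eq',
        Finset.mem_univ, if_true, reduceCtorEq, if_false, Matrix.fromBlocks, Sum.elim_inl, Sum.elim_inr]
    · rw [show (w:ℝ) * (b i * (c j / w)) = b i * c j by field_simp; try ring]
      exact A1 i j
    · simp only [← mul_div_assoc]
      rw [← Finset.sum_div, show ∑ x, B₀ i x * c x = -(b i * z) by linarith [A2 i]]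
      field_simp
      ring
    · rw [show ∑ x, b x * A x j = -(u * c j) by linarith [A3 j]]
      field_simp
      try ring
    · simp only [← mul_div_assoc]
      rw [← Finset.sum_div, show ∑ x, b x * c x = 1 - u * z by linarith [A4]]
      by_cases h : i = j <;> simp only [h, if_true, if_false] <;> field_simp <;> ring
  · ext i j
    rcases i with i | i <;> rcases j with j | j <;>
      simp only [Matrix.mul_apply, Fintype.sum_sum_type, Matrix.fromBlocks_apply₁₁,
        Matrix.fromBlocks_apply₁₂, Matrix.fromBlocks_apply₂₁, Matrix.fromBlocks_apply₂₂,
        Matrix.one_apply, Matrix.smul_apply, smul_eq_mul, Matrix.of_apply,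
        Sum.inl.injEq, Sum.inr.injEq, mul_ite, mul_one, mul_zero, ite_mul, zero_mul,
        mul_add, add_mul, Finset.sum_add_distrib, Finset.sum_const, Finset.card_univ,
        Fintype.card_fin, nsmul_eq_mul, Finset.sum_ite_eq, Finset.sum_ite_eq',
        Finset.mem_univ, if_true, reduceCtorEq, if_false, Matrix.fromBlocks, Sum.elim_inl, Sum.elim_inr]
    · rw [show (w:ℝ) * (c i / w * b j) = c i * b j by field_simp; try ring]
      exact B1 i j
    · rw [show ∑ x, A i x * b x = -(c i * u) by linarith [B2 i]]
      field_simp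
      try ring
    · simp only [div_mul_eq_mul_div]
      rw [← Finset.sum_div, show ∑ x, c x * B₀ x j = -(z * b j) by linarith [B3 j]]
      field_simp
      try ring
    · simp only [div_mul_eq_mul_div]
      rw [← Finset.sum_div, show ∑ x, c x * b x = 1 - z * u by linarith [B4]]
      by_cases h : i = j <;> simp only [h, if_true, if_false] <;> field_simp <;> ring
end

section
/- Let y ∈ ℝⁿ and x ∈ ℝ. For w ≥ 1, define y_w ∈ ℝ^{n+w} as the concatenation of y with w copies of x, and let B_w be the block matrix with B₀ in the upper-left, w copies of b in the columns, and uw·I_w in the lower-right, with B₁ invertible. Then y_wᵀ B_w⁻¹ y_w = y₁ᵀ B₁⁻¹ y₁ for all w ≥ 1, where y₁ is y concatenated with a single copy of x. -/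
open Matrix

theorem stmt_2 (n w : ℕ) (hw : 1 ≤ w)
    (B₀ : Matrix (Fin n) (Fin n) ℝ) (b : Fin n → ℝ) (u : ℝ) (hu : u ≠ 0)
    (y : Fin n → ℝ) (x : ℝ)
    (hB₁ : IsUnit (Matrix.fromBlocks B₀ (fun i _ => b i) (fun _ j => b j)
        (u • (1 : Matrix (Fin 1) (Fin 1) ℝ))).det) :
    (Sum.elim y fun _ : Fin w => x) ⬝ᵥ
      ((Matrix.fromBlocks B₀ (fun i _ => b i) (fun _ j => b j)
          ((u * w) • (1 : Matrix (Fin w) (Fin w) ℝ)))⁻¹ *ᵥ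
        (Sum.elim y fun _ : Fin w => x)) =
    (Sum.elim y fun _ : Fin 1 => x) ⬝ᵥ
      ((Matrix.fromBlocks B₀ (fun i _ => b i) (fun _ j => b j)
          (u • (1 : Matrix (Fin 1) (Fin 1) ℝ)))⁻¹ *ᵥ
        (Sum.elim y fun _ : Fin 1 => x)) := by
  have hwR : (w : ℝ) ≠ 0 := Nat.cast_ne_zero.mpr (by omega)
  have huw : u * (w : ℝ) ≠ 0 := mul_ne_zero hu hwR
  set B1 : Matrix (Fin n ⊕ Fin 1) (Fin n ⊕ Fin 1) ℝ :=
    fromBlocks B₀ (fun i _ => b i) (fun _ j => b j) (u • (1 : Matrix (Fin 1) (Fin 1) ℝ)) with hB1def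
  set Bw : Matrix (Fin n ⊕ Fin w) (Fin n ⊕ Fin w) ℝ :=
    fromBlocks B₀ (fun i _ => b i) (fun _ j => b j)
      ((u * w) • (1 : Matrix (Fin w) (Fin w) ℝ)) with hBwdef
  -- Invertible instances for the bottom-right blocks
  have hmul1 : (u • (1 : Matrix (Fin 1) (Fin 1) ℝ)) * (u⁻¹ • 1) = 1 := by
    rw [Matrix.smul_mul, Matrix.mul_smul, Matrix.one_mul, smul_smul,
      mul_inv_cancel₀ hu, one_smul]
  have hmulw : ((u * w) • (1 : Matrix (Fin w) (Fin w) ℝ)) * ((u * w)⁻¹ • 1) = 1 := by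
    rw [Matrix.smul_mul, Matrix.mul_smul, Matrix.one_mul, smul_smul,
      mul_inv_cancel₀ huw, one_smul]
  haveI hI1 : Invertible (u • (1 : Matrix (Fin 1) (Fin 1) ℝ)) :=
    invertibleOfRightInverse _ _ hmul1
  haveI hIw : Invertible ((u * w) • (1 : Matrix (Fin w) (Fin w) ℝ)) :=
    invertibleOfRightInverse _ _ hmulw
  have hinv1 : ⅟ (u • (1 : Matrix (Fin 1) (Fin 1) ℝ)) = u⁻¹ • 1 :=
    invOf_eq_right_inv hmul1
  have hinvw : ⅟ ((u * w) • (1 : Matrix (Fin w) (Fin w) ℝ)) = (u * w)⁻¹ • 1 :=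
    invOf_eq_right_inv hmulw
  -- Schur complements are equal
  have hschur : B₀ - (Matrix.of fun (i : Fin n) (_ : Fin w) => b i) *
        ⅟ ((u * w) • (1 : Matrix (Fin w) (Fin w) ℝ)) *
        (Matrix.of fun (_ : Fin w) (j : Fin n) => b j)
      = B₀ - (Matrix.of fun (i : Fin n) (_ : Fin 1) => b i) *
        ⅟ (u • (1 : Matrix (Fin 1) (Fin 1) ℝ)) *
        (Matrix.of fun (_ : Fin 1) (j : Fin n) => b j) := by
    rw [hinv1, hinvw]
    ext i j
    simp only [Matrix.sub_apply, Matrix.mul_apply, Matrix.smul_apply, Matrix.one_apply,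
      smul_eq_mul, Matrix.of_apply, mul_ite, ite_mul, mul_one, mul_zero, zero_mul,
      Finset.sum_ite_eq, Finset.sum_ite_eq', Finset.mem_univ, if_true]
    rw [Finset.sum_const, Fin.sum_univ_one, Finset.card_univ, Fintype.card_fin, nsmul_eq_mul]
    field_simp
  -- determinants
  have hdet1 : B1.det = (u • (1 : Matrix (Fin 1) (Fin 1) ℝ)).det *
      (B₀ - (Matrix.of fun (i : Fin n) (_ : Fin 1) => b i) *
        ⅟ (u • (1 : Matrix (Fin 1) (Fin 1) ℝ)) *
        (Matrix.of fun (_ : Fin 1) (j : Fin n) => b j)).det := det_fromBlocks₂₂ _ _ _ _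
  have hdetw : Bw.det = ((u * w) • (1 : Matrix (Fin w) (Fin w) ℝ)).det *
      (B₀ - (Matrix.of fun (i : Fin n) (_ : Fin w) => b i) *
        ⅟ ((u * w) • (1 : Matrix (Fin w) (Fin w) ℝ)) *
        (Matrix.of fun (_ : Fin w) (j : Fin n) => b j)).det := det_fromBlocks₂₂ _ _ _ _
  have hdetDw : ((u * w) • (1 : Matrix (Fin w) (Fin w) ℝ)).det ≠ 0 := by
    rw [det_smul, det_one, mul_one]
    exact pow_ne_zero _ huw
  have hS1 : (B₀ - (Matrix.of fun (i : Fin n) (_ : Fin 1) => b i) *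
      ⅟ (u • (1 : Matrix (Fin 1) (Fin 1) ℝ)) *
      (Matrix.of fun (_ : Fin 1) (j : Fin n) => b j)).det ≠ 0 := by
    intro h
    rw [hdet1, h, mul_zero] at hB₁
    exact hB₁.ne_zero rfl
  have hBw : IsUnit Bw.det := by
    rw [hdetw, hschur]
    exact (isUnit_iff_ne_zero.mpr hdetDw).mul (isUnit_iff_ne_zero.mpr hS1)
  -- the solution of the (w = 1) system
  set v : Fin n ⊕ Fin 1 → ℝ := B1⁻¹ *ᵥ (Sum.elim y fun _ : Fin 1 => x) with hvdef
  have hv : B1 *ᵥ v = Sum.elim y fun _ : Fin 1 => x := by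
    rw [hvdef, mulVec_mulVec, mul_nonsing_inv _ hB₁, one_mulVec]
  set p : Fin n → ℝ := v ∘ Sum.inl with hpdef
  set q : ℝ := v (Sum.inr 0) with hqdef
  have hvq : v ∘ Sum.inr = fun _ : Fin 1 => q := by
    funext i
    have : i = 0 := Subsingleton.elim _ _
    simp [this, hqdef]
  rw [hB1def, fromBlocks_mulVec (B := (fun i _ => b i : Matrix (Fin n) (Fin 1) ℝ))
    (C := (fun _ j => b j : Matrix (Fin 1) (Fin n) ℝ)), hvq] at hv
  have h1 : ∀ i, (B₀ *ᵥ p) i + b i * q = y i := by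
    intro i
    have h := congrFun hv (Sum.inl i)
    simpa [mulVec, dotProduct, Fin.sum_univ_one, hpdef] using h
  have h2 : b ⬝ᵥ p + u * q = x := by
    have h := congrFun hv (Sum.inr 0)
    simpa [mulVec, dotProduct, Fin.sum_univ_one, Matrix.one_apply, hpdef] using h
  -- the solution of the general system
  have hvw : Bw *ᵥ Sum.elim p (fun _ : Fin w => q / w) = Sum.elim y fun _ : Fin w => x := by
    rw [hBwdef, fromBlocks_mulVec (B := (fun i _ => b i : Matrix (Fin n) (Fin w) ℝ))
      (C := (fun _ j => b j : Matrix (Fin w) (Fin n) ℝ))]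
    funext i
    cases i with
    | inl i =>
      simp only [Sum.elim_inl, Sum.elim_comp_inl, Sum.elim_comp_inr, Pi.add_apply]
      rw [← h1 i]
      congr 1
      simp only [mulVec, dotProduct]
      rw [Finset.sum_const, Finset.card_univ, Fintype.card_fin, nsmul_eq_mul]
      field_simp
    | inr k =>
      simp only [Sum.elim_inr, Sum.elim_comp_inl, Sum.elim_comp_inr, smul_mulVec,
        one_mulVec, Pi.add_apply, Pi.smul_apply, smul_eq_mul]
      have hbp : ((fun _ j => b j) : Matrix (Fin w) (Fin n) ℝ) *ᵥ p = fun _ : Fin w => b ⬝ᵥ p := by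
        funext m
        simp [mulVec, dotProduct]
      rw [hbp, ← h2]
      congr 1
      field_simp
  have key : Bw⁻¹ *ᵥ (Sum.elim y fun _ : Fin w => x) = Sum.elim p (fun _ : Fin w => q / w) := by
    rw [← hvw, mulVec_mulVec, nonsing_inv_mul _ hBw, one_mulVec]
  rw [key]
  have hvsplit : v = Sum.elim p (fun _ : Fin 1 => q) := by
    funext i
    cases i with
    | inl i => rfl
    | inr i =>
      have : i = 0 := Subsingleton.elim _ _
      simp [this, hqdef]
  rw [hvsplit, sumElim_dotProduct_sumElim, sumElim_dotProduct_sumElim]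
  congr 1
  simp only [dotProduct]
  rw [Finset.sum_const, Fin.sum_univ_one, Finset.card_univ, Fintype.card_fin, nsmul_eq_mul]
  field_simp
end
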